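/- Let I ⊆ ℝ[x₁,…,xₙ] be an ideal and A ⊆ ℝ^n a finite s-distance set such that every polynomial in I vanishes on A. Then |A| ≤ h_{ℝ[x]/I}(s), where h_{ℝ[x]/I}(s) = dim_ℝ (ℝ[x]_{≤s} / I_{≤s}) is the affine Hilbert function of ℝ[x]/I at s. -/

import Mathlib

noncomputable section

open MvPolynomial

/-- The set of nonzero distances determined by a set `A` in Euclidean space. -/
def distSet {n : ℕ} (A : Set (EuclideanSpace ℝ (Fin n))) : Set ℝ :=
  {d | ∃ p ∈ A, ∃ q ∈ A, p ≠ q ∧ dist p q = d}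

namespace SDistAux


abbrev Euc (n : ℕ) := EuclideanSpace ℝ (Fin n)

def Good (n j : ℕ) (f : Euc n → ℝ) : Prop :=
  ∃ p : MvPolynomial (Fin n) ℝ, p.totalDegree ≤ j ∧ ∀ x : Euc n, f x = eval (fun i => x i) p

def TSet (n c : ℕ) : Set (Euc n → Euc n → ℝ) :=
  {K | ∃ j j' f g, j + j' ≤ c ∧ Good n j f ∧ Good n j' g ∧ K = fun a b => f a * g b}

def TMod (n c : ℕ) : Submodule ℝ (Euc n → Euc n → ℝ) := Submodule.span ℝ (TSet n c)

lemma TMod_mono {n : ℕ} {c c' : ℕ} (h : c ≤ c') : TMod n c ≤ TMod n c' := by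
  apply Submodule.span_mono
  rintro K ⟨j, j', f, g, hjj, hf, hg, rfl⟩
  exact ⟨j, j', f, g, hjj.trans h, hf, hg, rfl⟩

lemma TSet_mul {n c c' : ℕ} {K K' : Euc n → Euc n → ℝ}
    (h : K ∈ TSet n c) (h' : K' ∈ TSet n c') : K * K' ∈ TSet n (c + c') := by
  obtain ⟨j, j', f, g, hjj, ⟨p, hp, hfp⟩, ⟨q, hq, hgq⟩, rfl⟩ := h
  obtain ⟨k, k', f', g', hkk, ⟨p', hp', hfp'⟩, ⟨q', hq', hgq'⟩, rfl⟩ := h'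
  refine ⟨j + k, j' + k', fun a => f a * f' a, fun b => g b * g' b, by omega,
    ⟨p * p', le_trans (totalDegree_mul p p') (add_le_add hp hp'),
      fun x => by show f x * f' x = _; rw [map_mul, hfp, hfp']⟩,
    ⟨q * q', le_trans (totalDegree_mul q q') (add_le_add hq hq'),
      fun x => by show g x * g' x = _; rw [map_mul, hgq, hgq']⟩, ?_⟩
  funext a b
  show (fun a b => f a * g b) a b * (fun a b => f' a * g' b) a b = _
  ring

lemma TMod_mul {n c c' : ℕ} {K K' : Euc n → Euc n → ℝ}
    (h : K ∈ TMod n c) (h' : K' ∈ TMod n c') : K * K' ∈ TMod n (c + c') := by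
  induction h using Submodule.span_induction with
  | mem K hK =>
    induction h' using Submodule.span_induction with
    | mem K' hK' => exact Submodule.subset_span (TSet_mul hK hK')
    | zero => simpa using (TMod n (c + c')).zero_mem
    | add x y _ _ ihx ihy => simpa [mul_add] using (TMod n (c+c')).add_mem ihx ihy
    | smul r x _ ihx => simpa [mul_smul_comm] using (TMod n (c+c')).smul_mem r ihx
  | zero => simpa using (TMod n (c + c')).zero_mem
  | add x y _ _ ihx ihy => simpa [add_mul] using (TMod n (c+c')).add_mem ihx ihy
  | smul r x _ ihx => simpa [smul_mul_assoc] using (TMod n (c+c')).smul_mem r ihx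

lemma dist_sq_eq {n : ℕ} (a b : Euc n) :
    dist a b ^ 2 = (∑ i, (a i)^2) + (∑ i, (b i)^2) - ∑ i, 2 * a i * b i := by
  have h1 : dist a b ^ 2 = ∑ i, (a i - b i) ^ 2 := by
    rw [EuclideanSpace.dist_eq, Real.sq_sqrt (by positivity)]
    exact Finset.sum_congr rfl fun i _ => by rw [Real.dist_eq, sq_abs]
  rw [h1, ← Finset.sum_add_distrib, ← Finset.sum_sub_distrib]
  exact Finset.sum_congr rfl fun i _ => by ring

lemma good_const {n : ℕ} (c : ℝ) : Good n 0 (fun _ => c) :=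
  ⟨C c, by simp, fun x => by simp⟩

lemma good_normsq {n j : ℕ} (hj : 2 ≤ j) (c : ℝ) :
    Good n j (fun a : Euc n => c - ∑ i, (a i)^2) := by
  refine ⟨C c - ∑ i : Fin n, X i ^ 2, ?_, fun x => by simp⟩
  calc (C c - ∑ i : Fin n, X i ^ 2).totalDegree
      ≤ max (C c).totalDegree (∑ i : Fin n, X i ^ 2 : MvPolynomial (Fin n) ℝ).totalDegree := by
        rw [sub_eq_add_neg]
        refine (totalDegree_add _ _).trans ?_
        rw [totalDegree_neg]
    _ ≤ j := by
        apply max_le (by simp)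
        refine (totalDegree_finset_sum _ _).trans ?_
        refine (Finset.sup_le fun i _ => ?_)
        exact le_trans (totalDegree_pow _ _) (by simp [totalDegree_X]; omega)

lemma factor_mem {n : ℕ} (d : ℝ) :
    (fun a b : Euc n => d ^ 2 - dist a b ^ 2) ∈ TMod n 2 := by
  have hK : (fun a b : Euc n => d ^ 2 - dist a b ^ 2) =
      (fun a b : Euc n => (d ^ 2 - ∑ i, (a i)^2) * 1)
      + ((fun a b : Euc n => 1 * (0 - ∑ i, (b i)^2))
      + ∑ i : Fin n, fun a b : Euc n => (2 * a i) * (b i)) := by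
    funext a b
    have hs : (∑ i : Fin n, (fun a b : Euc n => (2 * a i) * (b i))) a b
        = ∑ i : Fin n, (2 * a i) * (b i) := by
      simp [Finset.sum_apply]
    simp only [Pi.add_apply, hs]
    rw [dist_sq_eq]
    ring
  rw [hK]
  refine Submodule.add_mem _ ?_ (Submodule.add_mem _ ?_ ?_)
  · exact Submodule.subset_span ⟨2, 0, _, _, le_refl 2, good_normsq le_rfl (d^2),
      good_const 1, rfl⟩
  · exact Submodule.subset_span ⟨0, 2, _, _, le_refl 2, good_const 1,
      good_normsq le_rfl 0, rfl⟩
  · refine Submodule.sum_mem _ fun i _ => Submodule.subset_span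
      ⟨1, 1, _, _, le_refl 2, ⟨C 2 * X i, ?_, fun x => by simp⟩, ⟨X i, by simp, fun x => by simp⟩, rfl⟩
    exact le_trans (totalDegree_mul _ _) (by simp [totalDegree_X])

lemma prod_mem {n : ℕ} (D : Finset ℝ) :
    (fun a b : Euc n => ∏ d ∈ D, (d ^ 2 - dist a b ^ 2)) ∈ TMod n (2 * D.card) := by
  classical
  induction D using Finset.induction_on with
  | empty =>
    simp only [Finset.prod_empty]
    exact Submodule.subset_span ⟨0, 0, _, _, by simp, good_const 1, good_const 1,
      by funext a b; simp⟩
  | insert d D' hd ih =>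
    have : (fun a b : Euc n => ∏ x ∈ insert d D', (x ^ 2 - dist a b ^ 2)) =
        (fun a b : Euc n => d ^ 2 - dist a b ^ 2) *
        (fun a b : Euc n => ∏ x ∈ D', (x ^ 2 - dist a b ^ 2)) := by
      funext a b
      show _ = (d ^ 2 - dist a b ^ 2) * _
      rw [Finset.prod_insert hd]
    rw [this]
    have := TMod_mul (factor_mem d) ih
    refine TMod_mono ?_ this
    rw [Finset.card_insert_of_notMem hd]
    omega

lemma core {n s : ℕ} (A : Finset (Euc n)) (D : Finset ℝ) (z : Euc n → ℝ)
    (hDs : D.card ≤ s)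
    (hD : ∀ a ∈ A, ∀ b ∈ A, a ≠ b → dist a b ∈ D)
    (hDpos : ∀ d ∈ D, 0 < d)
    (H : ∀ p : MvPolynomial (Fin n) ℝ, p.totalDegree ≤ s →
      ∑ a ∈ A, z a * eval (fun i => a i) p = 0) :
    ∀ a ∈ A, z a = 0 := by
  classical
  -- the bilinear functional
  let Φ : (Euc n → Euc n → ℝ) →ₗ[ℝ] ℝ :=
    { toFun := fun K => ∑ a ∈ A, ∑ b ∈ A, z a * z b * K a b
      map_add' := by
        intro K K'
        simp [mul_add, Finset.sum_add_distrib]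
      map_smul' := by
        intro r K
        simp only [Pi.smul_apply, smul_eq_mul, RingHom.id_apply, Finset.mul_sum]
        exact Finset.sum_congr rfl fun a _ => Finset.sum_congr rfl fun b _ => by ring }
  have hker : TMod n (2 * s) ≤ LinearMap.ker Φ := by
    rw [TMod, Submodule.span_le]
    rintro K ⟨j, j', f, g, hjj, ⟨p, hp, hfp⟩, ⟨q, hq, hgq⟩, rfl⟩
    have key : Φ (fun a b => f a * g b) = (∑ a ∈ A, z a * f a) * (∑ b ∈ A, z b * g b) := by
      rw [Finset.sum_mul_sum]
      exact Finset.sum_congr rfl fun a _ => Finset.sum_congr rfl fun b _ => by ring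
    have hzf : (∀ a ∈ A, True) := fun _ _ => trivial
    simp only [SetLike.mem_coe, LinearMap.mem_ker]
    rw [key]
    rcases le_or_gt j s with hjs | hjs
    · have : ∑ a ∈ A, z a * f a = 0 := by
        rw [show ∑ a ∈ A, z a * f a = ∑ a ∈ A, z a * eval (fun i => a i) p from
          Finset.sum_congr rfl fun a _ => by rw [hfp]]
        exact H p (hp.trans hjs)
      rw [this, zero_mul]
    · have hj's : j' ≤ s := by omega
      have : ∑ b ∈ A, z b * g b = 0 := by
        rw [show ∑ b ∈ A, z b * g b = ∑ b ∈ A, z b * eval (fun i => b i) q from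
          Finset.sum_congr rfl fun b _ => by rw [hgq]]
        exact H q (hq.trans hj's)
      rw [this, mul_zero]
  have hmem : (fun a b : Euc n => ∏ d ∈ D, (d ^ 2 - dist a b ^ 2)) ∈ TMod n (2 * s) :=
    TMod_mono (by omega) (prod_mem D)
  have hzero : Φ (fun a b : Euc n => ∏ d ∈ D, (d ^ 2 - dist a b ^ 2)) = 0 := hker hmem
  -- compute Φ of the product kernel
  have hdiag : Φ (fun a b : Euc n => ∏ d ∈ D, (d ^ 2 - dist a b ^ 2)) =
      (∏ d ∈ D, d ^ 2) * ∑ a ∈ A, z a ^ 2 := by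
    show (∑ a ∈ A, ∑ b ∈ A, z a * z b * ∏ d ∈ D, (d ^ 2 - dist a b ^ 2)) = _
    rw [Finset.mul_sum]
    refine Finset.sum_congr rfl fun a ha => ?_
    rw [Finset.sum_eq_single_of_mem a ha]
    · rw [dist_self]
      norm_num
      ring
    · intro b hb hba
      have hd : dist a b ∈ D := hD a ha b hb hba.symm
      rw [Finset.prod_eq_zero hd (by rw [sub_self])]
      ring
  rw [hdiag] at hzero
  have hprodpos : 0 < ∏ d ∈ D, d ^ 2 :=
    Finset.prod_pos fun d hd => pow_pos (hDpos d hd) 2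
  have hsum : ∑ a ∈ A, z a ^ 2 = 0 := by
    rcases mul_eq_zero.mp hzero with h | h
    · exact absurd h hprodpos.ne'
    · exact h
  intro a ha
  have := (Finset.sum_eq_zero_iff_of_nonneg fun b _ => sq_nonneg (z b)).mp hsum a ha
  exact pow_eq_zero_iff two_ne_zero |>.mp this
end SDistAux

open SDistAux in
/-- Main theorem: if `A ⊆ ℝ^n` is a finite `s`-distance set on which every
polynomial of an ideal `I` vanishes, then `|A|` is at most the value at `s` of
the affine Hilbert function of `ℝ[x]/I`, i.e. `dim_ℝ (ℝ[x]_{≤s} / I_{≤s})`. -/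

theorem sdist_le_hilbert_function {n s : ℕ}
    (I : Ideal (MvPolynomial (Fin n) ℝ))
    (A : Finset (EuclideanSpace ℝ (Fin n)))
    (hA : (distSet (A : Set (EuclideanSpace ℝ (Fin n)))).ncard ≤ s)
    (hvan : ∀ f ∈ I, ∀ a ∈ A, eval (fun i => a i) f = 0) :
    A.card ≤ Module.finrank ℝ
      ((restrictTotalDegree (Fin n) ℝ s) ⧸
        (Submodule.comap (restrictTotalDegree (Fin n) ℝ s).subtype
          (Submodule.restrictScalars ℝ I))) := by
  classical
  -- the finite set of distances
  have hfin : (distSet (A : Set (Euc n))).Finite := by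
    apply Set.Finite.subset (Set.Finite.image (fun pq : Euc n × Euc n => dist pq.1 pq.2)
      (A.finite_toSet.prod A.finite_toSet))
    rintro d ⟨p, hp, q, hq, _, rfl⟩
    exact ⟨(p, q), ⟨hp, hq⟩, rfl⟩
  set D : Finset ℝ := hfin.toFinset with hDdef
  have hDs : D.card ≤ s := by
    rwa [Set.ncard_eq_toFinset_card _ hfin] at hA
  have hD : ∀ a ∈ A, ∀ b ∈ A, a ≠ b → dist a b ∈ D := fun a ha b hb hab =>
    hfin.mem_toFinset.mpr ⟨a, ha, b, hb, hab, rfl⟩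
  have hDpos : ∀ d ∈ D, 0 < d := by
    intro d hd
    obtain ⟨p, _, q, _, hpq, rfl⟩ := hfin.mem_toFinset.mp hd
    exact dist_pos.mpr hpq
  -- the evaluation map
  let L : restrictTotalDegree (Fin n) ℝ s →ₗ[ℝ] EuclideanSpace ℝ {x // x ∈ A} :=
    { toFun := fun p => WithLp.toLp 2 fun a => eval (fun i => (a : Euc n) i) (p : MvPolynomial (Fin n) ℝ)
      map_add' := fun p q => PiLp.ext fun a => by
        simp [Submodule.coe_add, map_add, PiLp.add_apply]
      map_smul' := fun r p => PiLp.ext fun a => by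
        simp [Submodule.coe_smul, smul_eq_C_mul, PiLp.smul_apply, smul_eq_mul] }
  have hJker : (Submodule.comap (restrictTotalDegree (Fin n) ℝ s).subtype
      (Submodule.restrictScalars ℝ I)) ≤ LinearMap.ker L := by
    intro p hp
    have hpI : (p : MvPolynomial (Fin n) ℝ) ∈ I := hp
    refine LinearMap.mem_ker.mpr (PiLp.ext fun a => ?_)
    show eval (fun i => (a : Euc n) i) (p : MvPolynomial (Fin n) ℝ) = 0
    exact hvan _ hpI a a.2
  -- surjectivity of L
  have hsurj : Function.Surjective L := by
    by_contra hns
    have hrange : LinearMap.range L ≠ ⊤ := fun h => hns (LinearMap.range_eq_top.mp h)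
    have hbot : (LinearMap.range L)ᗮ ≠ ⊥ := fun h =>
      hrange (Submodule.orthogonal_eq_bot_iff.mp h)
    obtain ⟨z, hzmem, hz0⟩ := Submodule.ne_bot_iff _ |>.mp hbot
    set zext : Euc n → ℝ := fun x => if h : x ∈ A then z ⟨x, h⟩ else 0 with hzext
    have H : ∀ p : MvPolynomial (Fin n) ℝ, p.totalDegree ≤ s →
        ∑ a ∈ A, zext a * eval (fun i => a i) p = 0 := by
      intro p hps
      have hpV : p ∈ restrictTotalDegree (Fin n) ℝ s := by
        rw [mem_restrictTotalDegree]; exact hps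
      have horth := (Submodule.mem_orthogonal _ _).mp hzmem (L ⟨p, hpV⟩)
        (LinearMap.mem_range_self L ⟨p, hpV⟩)
      rw [PiLp.inner_apply] at horth
      simp only [RCLike.inner_apply, starRingEnd_apply, star_trivial] at horth
      rw [← Finset.sum_coe_sort A (fun a => zext a * eval (fun i => a i) p)]
      rw [← horth]
      refine Finset.sum_congr rfl fun a _ => ?_
      have : zext (a : Euc n) = z a := dif_pos a.2
      rw [this]
      rfl
    have hall := core A D zext hDs hD hDpos H
    refine hz0 (PiLp.ext fun a => ?_)
    show z a = (0 : EuclideanSpace ℝ {x // x ∈ A}) a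
    have h2 : z a = zext a.1 := by
      rw [hzext]
      show z a = if h : (a : Euc n) ∈ A then z ⟨a, h⟩ else 0
      rw [dif_pos a.2]
    rw [h2, hall a.1 a.2]; rfl
  -- conclude
  let Lbar := (Submodule.comap (restrictTotalDegree (Fin n) ℝ s).subtype
      (Submodule.restrictScalars ℝ I)).liftQ L hJker
  have hr : LinearMap.range Lbar = ⊤ := by
    rw [Submodule.range_liftQ]
    exact LinearMap.range_eq_top.mpr hsurj
  calc A.card = Module.finrank ℝ (EuclideanSpace ℝ {x // x ∈ A}) := by
        rw [finrank_euclideanSpace, Fintype.card_coe]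
    _ = Module.finrank ℝ ↥(LinearMap.range Lbar) := by rw [hr, finrank_top]
    _ ≤ _ := LinearMap.finrank_range_le Lbar
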